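/- arXiv:2404.18488 — 6 statements merged into one kernel-verified Lean document; each statement's English description precedes it below -/
import Mathlib

section
/- Let N ≥ 1, c > 1, and z ∈ ℝ^N. Then (1 − 2/c)·(max_i z_i − min_i z_i) ≤ Y_c(z) ≤ max_i z_i − min_i z_i. -/
open Real Finset

/-- Diameter: max minus min of a finite family of reals. -/
noncomputable def diam {N : ℕ} (v : Fin N → ℝ) : ℝ := (⨆ i, v i) - (⨅ i, v i)

/-- `S_c = Σ_{n=0}^{N-1} c^n`. -/
noncomputable def Sc (N : ℕ) (c : ℝ) : ℝ := ∑ n ∈ Finset.range N, c ^ n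

/-- `Y_c(z)`: difference of the two convex-type combinations of the nondecreasing
rearrangement of `z` (weights `c^{i-1}` and `c^{N-i}`), divided by `S_c`. -/
noncomputable def Yc {N : ℕ} (c : ℝ) (z : Fin N → ℝ) : ℝ :=
  (∑ i : Fin N, c ^ (i : ℕ) * z (Tuple.sort z i) -
   ∑ i : Fin N, c ^ (N - 1 - (i : ℕ)) * z (Tuple.sort z i)) / Sc N c

/-- for `N ≥ 1`, `c > 1` and `z ∈ ℝ^N`,
`(1 - 2/c)·(max z - min z) ≤ Y_c(z) ≤ max z - min z`. -/
theorem stmt1 {N : ℕ} (hN : 1 ≤ N) (c : ℝ) (hc : 1 < c) (z : Fin N → ℝ) :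
    (1 - 2 / c) * diam z ≤ Yc c z ∧ Yc c z ≤ diam z := by
  have hc0 : (0:ℝ) < c := lt_trans one_pos hc
  haveI : NeZero N := ⟨by omega⟩
  set w : Fin N → ℝ := z ∘ Tuple.sort z with hw
  have hmono : Monotone w := Tuple.monotone_sort z
  set last : Fin N := ⟨N-1, by omega⟩ with hlast
  have hle_last : ∀ i : Fin N, i ≤ last := by
    intro i; rw [Fin.le_def]; have := i.isLt; simp [hlast]; omega
  have hzero_le : ∀ i : Fin N, (0 : Fin N) ≤ i := fun i => by rw [Fin.le_def]; simp
  have hMle : ∀ i, z i ≤ w last := by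
    intro i
    have h1 : z i = w ((Tuple.sort z).symm i) := by
      simp [hw, Function.comp]
    rw [h1]; exact hmono (hle_last _)
  have hmge : ∀ i, w 0 ≤ z i := by
    intro i
    have h1 : z i = w ((Tuple.sort z).symm i) := by
      simp [hw, Function.comp]
    rw [h1]; exact hmono (hzero_le _)
  have hsup : (⨆ i, z i) = w last :=
    le_antisymm (ciSup_le hMle)
      (le_ciSup (Set.Finite.bddAbove (Set.finite_range z)) (Tuple.sort z last))
  have hinf : (⨅ i, z i) = w 0 :=
    le_antisymm
      (ciInf_le (Set.Finite.bddBelow (Set.finite_range z)) (Tuple.sort z 0))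
      (le_ciInf hmge)
  set D : ℝ := w last - w 0 with hDdef
  have hdiam : diam z = D := by rw [diam, hsup, hinf]
  have hD0 : 0 ≤ D := sub_nonneg.2 (hmono (hzero_le last))
  have hS0 : 0 < Sc N c := by
    apply Finset.sum_pos (fun i _ => pow_pos hc0 i)
    exact Finset.nonempty_range_iff.2 (by omega)
  -- rewrite second sum via rev
  have hrevval : ∀ i : Fin N, ((Fin.rev i : Fin N) : ℕ) = N - 1 - i := fun i => by rw [Fin.val_rev]; omega
  have hB : (∑ i : Fin N, c ^ (N - 1 - (i : ℕ)) * w i)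
      = ∑ i : Fin N, c ^ (i : ℕ) * w (Fin.rev i) := by
    rw [← Fintype.sum_bijective Fin.rev Fin.rev_bijective _ _ (fun i => rfl)]
    apply Finset.sum_congr rfl
    intro i _
    congr 2
    rw [hrevval]
    have := i.isLt; omega
  have hnum : Yc c z = (∑ i : Fin N, c ^ (i : ℕ) * (w i - w (Fin.rev i))) / Sc N c := by
    rw [Yc]
    congr 1
    have : (∑ i : Fin N, c ^ (N - 1 - (i : ℕ)) * z (Tuple.sort z i))
        = ∑ i : Fin N, c ^ (i : ℕ) * w (Fin.rev i) := hB
    rw [this]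
    rw [← Finset.sum_sub_distrib]
    apply Finset.sum_congr rfl
    intro i _
    simp [hw, Function.comp, mul_sub]
  have hScsum : (∑ i : Fin N, c ^ (i : ℕ)) = Sc N c := by
    rw [Sc, Fin.sum_univ_eq_sum_range]
  have hbound : ∀ i : Fin N, w i - w (Fin.rev i) ≤ D ∧ -D ≤ w i - w (Fin.rev i) := by
    intro i
    have h1 : w i ≤ w last := hmono (hle_last i)
    have h2 : w 0 ≤ w i := hmono (hzero_le i)
    have h3 : w (Fin.rev i) ≤ w last := hmono (hle_last _)
    have h4 : w 0 ≤ w (Fin.rev i) := hmono (hzero_le _)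
    constructor <;> [skip; skip] <;> simp [hDdef] <;> linarith
  constructor
  · -- lower bound
    have hlastval : ((last : Fin N) : ℕ) = N - 1 := rfl
    have hrevlast : Fin.rev last = (0 : Fin N) := by
      apply Fin.ext
      rw [hrevval, hlastval]
      simp
    have hsplit := Finset.add_sum_erase Finset.univ
      (fun i : Fin N => c ^ (i : ℕ) * (w i - w (Fin.rev i))) (Finset.mem_univ last)
    have hsplit2 := Finset.add_sum_erase Finset.univ
      (fun i : Fin N => c ^ (i : ℕ)) (Finset.mem_univ last)
    have herased : ∑ i ∈ Finset.univ.erase last, c ^ (i : ℕ) = Sc N c - c ^ (N - 1) := by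
      have : c ^ ((last : Fin N) : ℕ) + ∑ i ∈ Finset.univ.erase last, c ^ (i : ℕ) = Sc N c := by
        rw [hsplit2, hScsum]
      rw [hlastval] at this; linarith
    have hterm : (fun i : Fin N => c ^ (i : ℕ) * (w i - w (Fin.rev i))) last
        = c ^ (N - 1) * D := by
      simp only [hrevlast, hlastval, hDdef]
    have hrest : ∑ i ∈ Finset.univ.erase last, c ^ (i : ℕ) * (w i - w (Fin.rev i))
        ≥ ∑ i ∈ Finset.univ.erase last, c ^ (i : ℕ) * (-D) := by
      apply Finset.sum_le_sum
      intro i _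
      exact mul_le_mul_of_nonneg_left (hbound i).2 (le_of_lt (pow_pos hc0 _))
    have hnumge : (∑ i : Fin N, c ^ (i : ℕ) * (w i - w (Fin.rev i)))
        ≥ (2 * c ^ (N - 1) - Sc N c) * D := by
      rw [← hsplit, show c ^ ((last : Fin N) : ℕ) * (w last - w (Fin.rev last)) = c ^ (N - 1) * D from hterm]
      have : ∑ i ∈ Finset.univ.erase last, c ^ (i : ℕ) * (-D)
          = (Sc N c - c ^ (N - 1)) * (-D) := by
        rw [← Finset.sum_mul, herased]
      nlinarith [hrest, this]
    rw [hnum, hdiam, le_div_iff₀ hS0]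
    have hgeom : Sc N c * (c - 1) = c ^ N - 1 := geom_sum_mul c N
    have hcN : c ^ N = c ^ (N - 1) * c := by
      rw [← pow_succ]; congr 1; omega
    have hkey : (1 - 2 / c) * Sc N c ≤ 2 * c ^ (N - 1) - Sc N c := by
      have h1 : (1 - 2 / c) = (c - 2) / c := by field_simp
      rw [h1, div_mul_eq_mul_div, div_le_iff₀ hc0]
      nlinarith [hgeom, hcN]
    calc (1 - 2 / c) * D * Sc N c = ((1 - 2 / c) * Sc N c) * D := by ring
      _ ≤ (2 * c ^ (N - 1) - Sc N c) * D := mul_le_mul_of_nonneg_right hkey hD0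
      _ ≤ _ := hnumge
  · -- upper bound
    rw [hnum, hdiam, div_le_iff₀ hS0]
    calc (∑ i : Fin N, c ^ (i : ℕ) * (w i - w (Fin.rev i)))
        ≤ ∑ i : Fin N, c ^ (i : ℕ) * D := by
          apply Finset.sum_le_sum
          intro i _
          exact mul_le_mul_of_nonneg_left (hbound i).1 (le_of_lt (pow_pos hc0 _))
      _ = D * Sc N c := by rw [← Finset.sum_mul, hScsum, mul_comm]
end

section
/- Suppose m·a_i(0) + ω_i(0) = Ω_i + (K/N)·Σ_{j=1}^N ψ_{ij}·sin(θ_j(0) − θ_i(0) + α) for every i = 1,…,N, where m, K > 0, 0 < α < π/2, and 0 ≤ ψ_{ij} ≤ ψ_u for all i, j. Then D_a(0) ≤ (1/m)·D_ω(0) + (1/m)·D(Ω) + (2Kψ_u·cos α/m)·D_θ(0) + 2Kψ_u·sin α/m. -/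
open Real Finset

lemma abs_sub_le_diam {N : ℕ} [Nonempty (Fin N)] (v : Fin N → ℝ) (i j : Fin N) :
    |v i - v j| ≤ diam v := by
  have hbdd : BddAbove (Set.range v) := (Set.finite_range v).bddAbove
  have hbdd' : BddBelow (Set.range v) := (Set.finite_range v).bddBelow
  rw [abs_sub_le_iff]
  constructor <;>
  · refine sub_le_sub ?_ ?_
    · exact le_ciSup hbdd _
    · exact ciInf_le hbdd' _

lemma diam_nonneg {N : ℕ} [Nonempty (Fin N)] (v : Fin N → ℝ) : 0 ≤ diam v := by
  have := abs_sub_le_diam v (Classical.arbitrary _) (Classical.arbitrary _)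
  exact le_trans (abs_nonneg _) this

/-- the initial acceleration-diameter estimate. -/
theorem stmt3 {N : ℕ} (hN : 1 ≤ N) (m K α ψu : ℝ) (hm : 0 < m) (hK : 0 < K)
    (hα0 : 0 < α) (hα : α < π / 2)
    (θ0 ω0 a0 Ω : Fin N → ℝ) (ψ : Fin N → Fin N → ℝ)
    (hψ : ∀ i j, 0 ≤ ψ i j ∧ ψ i j ≤ ψu)
    (heq : ∀ i, m * a0 i + ω0 i =
      Ω i + (K / N) * ∑ j : Fin N, ψ i j * Real.sin (θ0 j - θ0 i + α)) :
    (⨆ i, ⨆ j, |a0 i - a0 j|) ≤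
      (1 / m) * diam ω0 + (1 / m) * diam Ω
        + (2 * K * ψu * Real.cos α / m) * diam θ0 + 2 * K * ψu * Real.sin α / m := by
  haveI : Nonempty (Fin N) := Fin.pos_iff_nonempty.mp hN
  have hcos : 0 ≤ Real.cos α := Real.cos_nonneg_of_mem_Icc
    ⟨by linarith [Real.pi_pos], le_of_lt hα⟩
  have hsin : 0 ≤ Real.sin α := Real.sin_nonneg_of_nonneg_of_le_pi (le_of_lt hα0)
    (by linarith [Real.pi_pos])
  have hψu : 0 ≤ ψu := le_trans (hψ ⟨0, hN⟩ ⟨0, hN⟩).1 (hψ ⟨0, hN⟩ ⟨0, hN⟩).2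
  set B : ℝ := Real.cos α * diam θ0 + Real.sin α with hB
  have hBnn : 0 ≤ B := by
    have := diam_nonneg θ0
    positivity
  -- bound each interaction sum
  have hNpos : (0:ℝ) < N := by exact_mod_cast hN
  have hsum : ∀ i : Fin N,
      |∑ j : Fin N, ψ i j * Real.sin (θ0 j - θ0 i + α)| ≤ N * (ψu * B) := by
    intro i
    calc |∑ j : Fin N, ψ i j * Real.sin (θ0 j - θ0 i + α)|
        ≤ ∑ j : Fin N, |ψ i j * Real.sin (θ0 j - θ0 i + α)| :=
          Finset.abs_sum_le_sum_abs _ _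
      _ ≤ ∑ _j : Fin N, ψu * B := by
          refine Finset.sum_le_sum fun j _ => ?_
          rw [abs_mul]
          refine mul_le_mul (by rw [abs_of_nonneg (hψ i j).1]; exact (hψ i j).2) ?_
            (abs_nonneg _) hψu
          have : |Real.sin (θ0 j - θ0 i + α)| ≤
              |Real.sin (θ0 j - θ0 i)| * Real.cos α + |Real.cos (θ0 j - θ0 i)| * Real.sin α := by
            rw [Real.sin_add]
            calc _ ≤ |Real.sin (θ0 j - θ0 i) * Real.cos α| +
                |Real.cos (θ0 j - θ0 i) * Real.sin α| := abs_add_le _ _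
              _ = _ := by rw [abs_mul, abs_mul, abs_of_nonneg hcos, abs_of_nonneg hsin]
          refine this.trans ?_
          rw [hB]
          have h1 : |Real.sin (θ0 j - θ0 i)| ≤ diam θ0 :=
            (Real.abs_sin_le_abs).trans (abs_sub_le_diam θ0 j i)
          have h2 : |Real.cos (θ0 j - θ0 i)| ≤ 1 := Real.abs_cos_le_one _
          nlinarith
      _ = N * (ψu * B) := by simp [mul_comm]
  -- pointwise bound
  have key : ∀ i j : Fin N, |a0 i - a0 j| ≤
      (1 / m) * diam ω0 + (1 / m) * diam Ω
        + (2 * K * ψu * Real.cos α / m) * diam θ0 + 2 * K * ψu * Real.sin α / m := by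
    intro i j
    have hi := heq i
    have hj := heq j
    have hdiff : m * (a0 i - a0 j) = (Ω i - Ω j) + (ω0 j - ω0 i)
        + (K / N) * ∑ k : Fin N, ψ i k * Real.sin (θ0 k - θ0 i + α)
        - (K / N) * ∑ k : Fin N, ψ j k * Real.sin (θ0 k - θ0 j + α) := by
      linarith
    have habs : |m * (a0 i - a0 j)| ≤ diam Ω + diam ω0 + 2 * (K * (ψu * B)) := by
      rw [hdiff]
      have hΩ := abs_sub_le_diam Ω i j
      have hω := abs_sub_le_diam ω0 j i
      have hSi := hsum i
      have hSj := hsum j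
      have hKN : 0 ≤ K / N := by positivity
      have hi' : |(K / N) * ∑ k : Fin N, ψ i k * Real.sin (θ0 k - θ0 i + α)| ≤ K * (ψu * B) := by
        rw [abs_mul, abs_of_nonneg hKN]
        calc (K / N) * |∑ k : Fin N, ψ i k * Real.sin (θ0 k - θ0 i + α)|
            ≤ (K / N) * (N * (ψu * B)) := by
              exact mul_le_mul_of_nonneg_left hSi hKN
          _ = K * (ψu * B) := by field_simp
      have hj' : |(K / N) * ∑ k : Fin N, ψ j k * Real.sin (θ0 k - θ0 j + α)| ≤ K * (ψu * B) := by
        rw [abs_mul, abs_of_nonneg hKN]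
        calc (K / N) * |∑ k : Fin N, ψ j k * Real.sin (θ0 k - θ0 j + α)|
            ≤ (K / N) * (N * (ψu * B)) := by
              exact mul_le_mul_of_nonneg_left hSj hKN
          _ = K * (ψu * B) := by field_simp
      have := abs_le.mp hΩ
      have := abs_le.mp hω
      have := abs_le.mp hi'
      have := abs_le.mp hj'
      rw [abs_le]
      constructor <;> linarith
    have : |a0 i - a0 j| = |m * (a0 i - a0 j)| / m := by
      rw [abs_mul, abs_of_pos hm]; field_simp
    rw [this]
    rw [div_le_iff₀ hm]
    refine habs.trans (le_of_eq ?_)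
    rw [hB]
    field_simp
    ring
  refine ciSup_le fun i => ciSup_le fun j => key i j
end

section
/- Let θ_1 ≤ θ_2 ≤ … ≤ θ_N be real numbers with θ_N − θ_1 < π, on a symmetric connected network. Then Σ_{i=2}^N Σ_{j=1,…,i−1 with ψ_{ij}>0} sin(θ_j − θ_i) ≤ −sin(θ_N − θ_1), and Σ_{i=1}^{N−1} Σ_{j=i+1,…,N with ψ_{ij}>0} sin(θ_j − θ_i) ≥ sin(θ_N − θ_1). -/
open Real Finset

/-- The interaction graph: `i` and `j` adjacent iff `i ≠ j` and the (symmetric) weight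
`ψ i j` is positive. -/
def netGraph {N : ℕ} (ψ : Fin N → Fin N → ℝ) : SimpleGraph (Fin N) where
  Adj i j := i ≠ j ∧ 0 < ψ i j ∧ 0 < ψ j i
  symm := ⟨fun _ _ h => ⟨h.1.symm, h.2.2, h.2.1⟩⟩
  loopless := ⟨fun _ h => h.1 rfl⟩

/-- Linear lower bound for `sin` on `[0, D]` by concavity. -/
lemma sin_ge_linear {D t : ℝ} (hD : 0 < D) (hDpi : D < π) (ht0 : 0 ≤ t) (htD : t ≤ D) :
    t * (Real.sin D / D) ≤ Real.sin t := by
  have hle : t / D ≤ 1 := (div_le_one hD).2 htD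
  have h := strictConcaveOn_sin_Icc.concaveOn.2
    (show (0 : ℝ) ∈ Set.Icc 0 π from ⟨le_rfl, Real.pi_pos.le⟩)
    (show D ∈ Set.Icc 0 π from ⟨hD.le, hDpi.le⟩)
    (show (0 : ℝ) ≤ 1 - t / D by linarith)
    (show (0 : ℝ) ≤ t / D by positivity)
    (show (1 - t / D) + t / D = 1 by ring)
  simp only [smul_eq_mul, mul_zero, Real.sin_zero, zero_add] at h
  have hcan : t / D * D = t := div_mul_cancel₀ t hD.ne'
  rw [hcan] at h
  calc t * (Real.sin D / D) = t / D * Real.sin D := by ring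
    _ ≤ Real.sin t := h

/-- Every "cut" of the vertex set is crossed by an edge of a connected graph. -/
lemma crossing {N : ℕ} (ψ : Fin N → Fin N → ℝ) (hconn : (netGraph ψ).Connected)
    (k : ℕ) (hk : k < N - 1) :
    ∃ i j : Fin N, (i : ℕ) ≤ k ∧ k < (j : ℕ) ∧ 0 < ψ i j := by
  have h1 : k < N := by omega
  have h2 : k + 1 < N := by omega
  obtain ⟨w⟩ := hconn.preconnected ⟨k, h1⟩ ⟨k + 1, h2⟩
  obtain ⟨d, _, hdS, hdS'⟩ := w.exists_boundary_dart {v : Fin N | (v : ℕ) ≤ k}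
    (by simp) (by simp)
  exact ⟨d.fst, d.snd, hdS, by simpa using hdS', d.adj.2.1⟩

/-- The key lower bound on the ordered-pair interaction sum. -/
lemma keyB {N : ℕ} (hN : 2 ≤ N) (θ : Fin N → ℝ) (hmono : Monotone θ)
    (ψ : Fin N → Fin N → ℝ) (hconn : (netGraph ψ).Connected)
    (a b : Fin N) (ha : (a : ℕ) = 0) (hb : (b : ℕ) = N - 1)
    (hdiam : θ b - θ a < π) :
    Real.sin (θ b - θ a) ≤ ∑ i : Fin N, ∑ j ∈ Finset.univ.filter
      (fun j => i < j ∧ 0 < ψ i j), Real.sin (θ j - θ i) := by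
  have hab : ∀ i : Fin N, θ a ≤ θ i ∧ θ i ≤ θ b := by
    intro i
    constructor <;> apply hmono <;> simp [Fin.le_def, ha, hb] <;> omega
  have hD0 : 0 ≤ θ b - θ a := sub_nonneg.2 (hab a).2
  rcases eq_or_lt_of_le hD0 with hD | hD
  · have hθ : ∀ i, θ i = θ a := fun i =>
      le_antisymm ((hab i).2.trans (by linarith)) (hab i).1
    rw [← hD, Real.sin_zero]
    exact Finset.sum_nonneg fun i _ => Finset.sum_nonneg fun j _ => by
      rw [hθ i, hθ j, sub_self, Real.sin_zero]
  · set D := θ b - θ a with hDdef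
    -- the telescoping pieces
    set g : ℕ → ℝ := fun k => θ ⟨min k (N - 1), by omega⟩ with hg
    set d : ℕ → ℝ := fun k => g (k + 1) - g k with hd
    have hd0 : ∀ k, 0 ≤ d k := fun k =>
      sub_nonneg.2 (hmono (by simp only [Fin.le_def]; omega))
    have hgi : ∀ i : Fin N, g (i : ℕ) = θ i := by
      intro i
      have : min (i : ℕ) (N - 1) = (i : ℕ) := by omega
      simp only [hg, this]
    have htel : ∀ i j : Fin N, i ≤ j →
        θ j - θ i = ∑ k ∈ Finset.Ico (i : ℕ) (j : ℕ), d k := by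
      intro i j hij
      rw [Finset.sum_Ico_eq_sub _ hij, Finset.sum_range_sub (f := g),
        Finset.sum_range_sub (f := g), hgi, hgi]
      ring
    have hDD : D = ∑ k ∈ Finset.range (N - 1), d k := by
      rw [Finset.sum_range_sub (f := g), hDdef, ← hgi a, ← hgi b, ha, hb]
    -- rewrite the double sum as a sum over the edge set
    set P : Finset (Fin N × Fin N) := (Finset.univ ×ˢ Finset.univ).filter
      (fun p : Fin N × Fin N => p.1 < p.2 ∧ 0 < ψ p.1 p.2) with hP
    have hprod : ∀ f : Fin N → Fin N → ℝ,
        (∑ p ∈ P, f p.1 p.2) = ∑ i : Fin N, ∑ j ∈ Finset.univ.filter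
          (fun j => i < j ∧ 0 < ψ i j), f i j := by
      intro f
      rw [hP, Finset.sum_filter, Finset.univ_product_univ, Fintype.sum_prod_type]
      exact Finset.sum_congr rfl fun i _ => (Finset.sum_filter _ _).symm
    -- lower bound on the total phase gap over edges
    have hT : D ≤ ∑ p ∈ P, (θ p.2 - θ p.1) := by
      have hio : ∀ p ∈ P, θ p.2 - θ p.1 =
          ∑ k ∈ Finset.range (N - 1),
            (if (p.1 : ℕ) ≤ k ∧ k < (p.2 : ℕ) then d k else 0) := by
        intro p hp
        obtain ⟨-, hlt, -⟩ := Finset.mem_filter.1 hp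
        rw [Finset.sum_ite, Finset.sum_const_zero, add_zero]
        rw [htel p.1 p.2 hlt.le]
        refine (Finset.sum_congr ?_ fun _ _ => rfl)
        ext k
        simp only [Finset.mem_Ico, Finset.mem_filter, Finset.mem_range]
        have := p.2.isLt
        omega
      rw [Finset.sum_congr rfl hio, Finset.sum_comm, hDD]
      refine Finset.sum_le_sum fun k hk => ?_
      obtain ⟨i, j, hik, hkj, hψ⟩ := crossing ψ hconn k (Finset.mem_range.1 hk)
      have hmem : (i, j) ∈ P := by
        refine Finset.mem_filter.2 ⟨by simp, ?_, hψ⟩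
        show i < j
        exact Fin.lt_def.2 (by omega)
      have := Finset.single_le_sum
        (f := fun p : Fin N × Fin N =>
          if (p.1 : ℕ) ≤ k ∧ k < (p.2 : ℕ) then d k else 0)
        (fun p _ => by by_cases h : ((p.1 : ℕ) ≤ k ∧ k < (p.2 : ℕ)) <;> simp [h, hd0 k]) hmem
      simpa [hik, hkj] using this
    -- pointwise concavity bound
    have hsinD : 0 ≤ Real.sin D := Real.sin_nonneg_of_nonneg_of_le_pi hD.le hdiam.le
    have step1 : (∑ p ∈ P, (θ p.2 - θ p.1)) * (Real.sin D / D) ≤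
        ∑ p ∈ P, Real.sin (θ p.2 - θ p.1) := by
      rw [Finset.sum_mul]
      refine Finset.sum_le_sum fun p hp => ?_
      obtain ⟨-, hlt, -⟩ := Finset.mem_filter.1 hp
      exact sin_ge_linear hD hdiam (sub_nonneg.2 (hmono hlt.le))
        (by have h1 := (hab p.1).1; have h2 := (hab p.2).2; rw [hDdef]; linarith)
    rw [← hprod fun i j => Real.sin (θ j - θ i)]
    calc Real.sin D = D * (Real.sin D / D) := by field_simp
      _ ≤ (∑ p ∈ P, (θ p.2 - θ p.1)) * (Real.sin D / D) :=
          mul_le_mul_of_nonneg_right hT (by positivity)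
      _ ≤ _ := step1

/-- key dissipation estimate for ordered phases on a connected network. -/
theorem stmt4 {N : ℕ} (hN : 2 ≤ N) (θ : Fin N → ℝ) (hmono : Monotone θ)
    (ψ : Fin N → Fin N → ℝ) (hψsym : ∀ i j, ψ i j = ψ j i) (hψnn : ∀ i j, 0 ≤ ψ i j)
    (hconn : (netGraph ψ).Connected)
    (hdiam : θ ⟨N - 1, by omega⟩ - θ ⟨0, by omega⟩ < π) :
    (∑ i : Fin N, ∑ j ∈ Finset.univ.filter (fun j => j < i ∧ 0 < ψ i j),
        Real.sin (θ j - θ i))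
      ≤ - Real.sin (θ ⟨N - 1, by omega⟩ - θ ⟨0, by omega⟩) ∧
    Real.sin (θ ⟨N - 1, by omega⟩ - θ ⟨0, by omega⟩) ≤
      ∑ i : Fin N, ∑ j ∈ Finset.univ.filter (fun j => i < j ∧ 0 < ψ i j),
        Real.sin (θ j - θ i) := by
  have key := keyB hN θ hmono ψ hconn ⟨0, by omega⟩ ⟨N - 1, by omega⟩ rfl rfl hdiam
  refine ⟨?_, key⟩
  have h1 : (∑ i : Fin N, ∑ j ∈ Finset.univ.filter (fun j => j < i ∧ 0 < ψ i j),
      Real.sin (θ j - θ i))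
      = ∑ i : Fin N, ∑ j ∈ Finset.univ.filter (fun j => i < j ∧ 0 < ψ i j),
        Real.sin (θ i - θ j) := by
    simp only [Finset.sum_filter]
    rw [Finset.sum_comm]
    exact Finset.sum_congr rfl fun i _ => Finset.sum_congr rfl fun j _ => by rw [hψsym]
  have h2 : (∑ i : Fin N, ∑ j ∈ Finset.univ.filter (fun j => i < j ∧ 0 < ψ i j),
      Real.sin (θ i - θ j))
      = - ∑ i : Fin N, ∑ j ∈ Finset.univ.filter (fun j => i < j ∧ 0 < ψ i j),
        Real.sin (θ j - θ i) := by
    rw [← Finset.sum_neg_distrib]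
    exact Finset.sum_congr rfl fun i _ => by
      rw [← Finset.sum_neg_distrib]
      exact Finset.sum_congr rfl fun j _ => by rw [← Real.sin_neg, neg_sub]
  rw [h1, h2]
  exact neg_le_neg key
end

section
/- Let (θ, ω) be a twice continuously differentiable-in-frequency solution of the inertial frustrated Kuramoto model (so that a_i = ω_i' and a_i' exist), with all weights satisfying 0 ≤ ψ_{ij} ≤ ψ_u, and let c > 2, η = 1 − 2/c. Let I be an open interval of times and ρ a permutation of {1,…,N} such that a_{ρ(1)}(t) ≤ … ≤ a_{ρ(N)}(t) for all t ∈ I, and define A(t) = (Σ_{i=1}^N c^{i−1}·a_{ρ(i)}(t) − Σ_{i=1}^N c^{N−i}·a_{ρ(i)}(t))/S_c and F(t) = Y_c(ω(t)). Then for every t ∈ I: m·A'(t) + A(t) ≤ (2K·ψ_u/η)·F(t). -/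
open Real Finset

/-- Difference of the two convex combinations, along a fixed permutation, of a family of
time-dependent quantities. -/
noncomputable def comb {N : ℕ} (c : ℝ) (σ : Equiv.Perm (Fin N)) (g : Fin N → ℝ → ℝ) :
    ℝ → ℝ :=
  fun t => (∑ i : Fin N, c ^ (i : ℕ) * g (σ i) t
    - ∑ i : Fin N, c ^ (N - 1 - (i : ℕ)) * g (σ i) t) / Sc N c

lemma Sc_pos' {N : ℕ} (hN : 1 ≤ N) {c : ℝ} (hc : 0 < c) : 0 < Sc N c :=
  Finset.sum_pos (fun n _ => pow_pos hc n) (by simp; omega)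

lemma sum_pow_fst' {N : ℕ} (c : ℝ) : ∑ i : Fin N, c ^ (i : ℕ) = Sc N c :=
  Fin.sum_univ_eq_sum_range _ N

lemma sum_pow_rev' {N : ℕ} (c : ℝ) : ∑ i : Fin N, c ^ (N - 1 - (i : ℕ)) = Sc N c := by
  rw [← sum_pow_fst']
  exact Fintype.sum_bijective Fin.rev Fin.rev_involutive.bijective _ _
    (fun i => by rw [Fin.val_rev]; congr 1; omega)

lemma Yc_ge' {N : ℕ} (hN : 2 ≤ N) {c : ℝ} (hc : 2 < c) (v : Fin N → ℝ) :
    (1 - 2 / c) * diam v ≤ Yc c v := by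
  have hc0 : (0:ℝ) < c := by linarith
  have hS : 0 < Sc N c := Sc_pos' (by omega) hc0
  set w : Fin N → ℝ := fun i => v (Tuple.sort v i) with hw
  have hmono : Monotone w := Tuple.monotone_sort v
  set top : Fin N := ⟨N-1, by omega⟩
  set bot : Fin N := ⟨0, by omega⟩
  set D : ℝ := w top - w bot with hD
  have hD0 : 0 ≤ D := sub_nonneg.2 (hmono (by simp [top, bot, Fin.le_def]))
  haveI : Nonempty (Fin N) := ⟨bot⟩
  have hdiam : diam v ≤ D := by
    have h1 : (⨆ i, v i) ≤ w top := by
      refine ciSup_le fun i => ?_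
      have : v i = w ((Tuple.sort v).symm i) := by simp [hw]
      rw [this]
      exact hmono (by simp [top, Fin.le_def]; omega)
    have h2 : w bot ≤ ⨅ i, v i := by
      refine le_ciInf fun i => ?_
      have : v i = w ((Tuple.sort v).symm i) := by simp [hw]
      rw [this]
      exact hmono (by simp [bot, Fin.le_def])
    simp only [diam, hD]; linarith
  have h1 : c ^ (N-1) * D ≤ ∑ i : Fin N, c ^ (i:ℕ) * (w i - w bot) := by
    have := Finset.single_le_sum (f := fun i : Fin N => c ^ (i:ℕ) * (w i - w bot))
      (fun i _ => mul_nonneg (pow_nonneg hc0.le _)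
        (sub_nonneg.2 (hmono (by simp [bot, Fin.le_def])))) (Finset.mem_univ top)
    simpa [top] using this
  have h2 : c ^ (N-1) * D ≤ ∑ i : Fin N, c ^ (N-1-(i:ℕ)) * (w top - w i) := by
    have := Finset.single_le_sum (f := fun i : Fin N => c ^ (N-1-(i:ℕ)) * (w top - w i))
      (fun i _ => mul_nonneg (pow_nonneg hc0.le _)
        (sub_nonneg.2 (hmono (by simp [top, Fin.le_def]; omega)))) (Finset.mem_univ bot)
    simpa [bot] using this
  have expand : ∑ i : Fin N, c ^ (i:ℕ) * w i - ∑ i : Fin N, c ^ (N-1-(i:ℕ)) * w i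
      = (∑ i : Fin N, c ^ (i:ℕ) * (w i - w bot))
        + (∑ i : Fin N, c ^ (N-1-(i:ℕ)) * (w top - w i)) - Sc N c * D := by
    simp only [mul_sub, Finset.sum_sub_distrib, ← Finset.sum_mul, sum_pow_fst', sum_pow_rev', hD]
    ring
  have hnum : (2 * c ^ (N-1) - Sc N c) * D ≤
      ∑ i : Fin N, c ^ (i:ℕ) * w i - ∑ i : Fin N, c ^ (N-1-(i:ℕ)) * w i := by
    rw [expand]; linarith
  have hcoef : (1 - 2 / c) * Sc N c ≤ 2 * c ^ (N-1) - Sc N c := by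
    have hg : Sc N c * (c - 1) = c ^ N - 1 := geom_sum_mul c N
    have hp : c ^ N = c ^ (N-1) * c := by
      rw [← pow_succ]; congr 1; omega
    rw [show (1 - 2/c) = (c-2)/c by field_simp, div_mul_eq_mul_div, div_le_iff₀ hc0]
    nlinarith [hS, pow_pos hc0 (N-1)]
  have hYc : (2 * c ^ (N-1) - Sc N c) / Sc N c * D ≤ Yc c v := by
    rw [Yc, div_mul_eq_mul_div, div_le_div_iff₀ hS hS]
    calc (2 * c ^ (N-1) - Sc N c) * D * Sc N c
        ≤ (∑ i : Fin N, c ^ (i:ℕ) * w i - ∑ i : Fin N, c ^ (N-1-(i:ℕ)) * w i) * Sc N c :=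
          mul_le_mul_of_nonneg_right hnum hS.le
      _ = _ := by rw [hw]
  calc (1 - 2/c) * diam v ≤ (1 - 2/c) * D := by
        have : 0 < 1 - 2/c := by
          have : 2/c < 1 := (div_lt_one hc0).2 (by linarith)
          linarith
        exact mul_le_mul_of_nonneg_left hdiam this.le
    _ ≤ (2 * c ^ (N-1) - Sc N c) / Sc N c * D := by
        apply mul_le_mul_of_nonneg_right _ hD0
        rw [le_div_iff₀ hS]; exact hcoef
    _ ≤ Yc c v := hYc

/-- first-order differential inequality for the acceleration combination `A`. -/
theorem stmt10 {N : ℕ} (hN : 2 ≤ N) (m K α ψu : ℝ) (hm : 0 < m) (hK : 0 < K)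
    (hα0 : 0 < α) (hα : α < π / 2)
    (Ω : Fin N → ℝ) (ψ : Fin N → Fin N → ℝ)
    (hψ : ∀ i j, 0 ≤ ψ i j ∧ ψ i j ≤ ψu)
    (θ : Fin N → ℝ → ℝ) (hsmooth : ∀ i, ContDiff ℝ 3 (θ i))
    (hode : ∀ i, ∀ t : ℝ, 0 ≤ t →
      m * deriv (deriv (θ i)) t + deriv (θ i) t =
        Ω i + (K / N) * ∑ j : Fin N, ψ i j * Real.sin (θ j t - θ i t + α))
    (c η : ℝ) (hc : 2 < c) (hη : η = 1 - 2 / c)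
    (t1 t2 : ℝ) (ht1 : 0 ≤ t1)
    (ρ : Equiv.Perm (Fin N))
    (hord : ∀ t ∈ Set.Ioo t1 t2, Monotone fun i => deriv (deriv (θ (ρ i))) t) :
    ∀ t ∈ Set.Ioo t1 t2,
      m * deriv (comb c ρ (fun i => deriv (deriv (θ i)))) t
          + comb c ρ (fun i => deriv (deriv (θ i))) t ≤
        (2 * K * ψu / η) * Yc c (fun i => deriv (θ i) t) := by
  intro t ht
  haveI : Nonempty (Fin N) := ⟨⟨0, by omega⟩⟩
  have hc0 : (0:ℝ) < c := by linarith
  have hS : 0 < Sc N c := Sc_pos' (by omega) hc0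
  have hN0 : (0:ℝ) < (N:ℝ) := by exact_mod_cast (by omega : 0 < N)
  have hψu : 0 ≤ ψu := le_trans (hψ ⟨0, by omega⟩ ⟨0, by omega⟩).1
    (hψ ⟨0, by omega⟩ ⟨0, by omega⟩).2
  -- differentiability
  have hd1 : ∀ i, Differentiable ℝ (θ i) := fun i =>
    ((contDiff_succ_iff_deriv (n := 2)).mp (by exact_mod_cast hsmooth i)).1
  have hc2 : ∀ i, ContDiff ℝ 2 (deriv (θ i)) := fun i =>
    ((contDiff_succ_iff_deriv (n := 2)).mp (by exact_mod_cast hsmooth i)).2.2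
  have hd2 : ∀ i, Differentiable ℝ (deriv (θ i)) := fun i =>
    ((contDiff_succ_iff_deriv (n := 1)).mp (by exact_mod_cast hc2 i)).1
  have hd3 : ∀ i, Differentiable ℝ (deriv (deriv (θ i))) := fun i => by
    have := ((contDiff_succ_iff_deriv (n := 1)).mp (by exact_mod_cast hc2 i)).2.2
    exact ((contDiff_succ_iff_deriv (n := 0)).mp (by exact_mod_cast this)).1
  -- the differentiated ODE at time t
  have hkey : ∀ i, m * deriv (deriv (deriv (θ i))) t + deriv (deriv (θ i)) t =
      (K / N) * ∑ j : Fin N, ψ i j *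
        (Real.cos (θ j t - θ i t + α) * (deriv (θ j) t - deriv (θ i) t)) := by
    intro i
    have hmem : Set.Ioo t1 t2 ∈ nhds t := Ioo_mem_nhds ht.1 ht.2
    have heq : (fun s => m * deriv (deriv (θ i)) s + deriv (θ i) s) =ᶠ[nhds t]
        (fun s => Ω i + (K / N) * ∑ j : Fin N, ψ i j * Real.sin (θ j s - θ i s + α)) :=
      Filter.eventuallyEq_of_mem hmem fun s hs => hode i s (le_trans ht1 hs.1.le)
    have hL : HasDerivAt (fun s => m * deriv (deriv (θ i)) s + deriv (θ i) s)
        (m * deriv (deriv (deriv (θ i))) t + deriv (deriv (θ i)) t) t :=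
      (((hd3 i t).hasDerivAt).const_mul m).add ((hd2 i t).hasDerivAt)
    have hR : HasDerivAt (fun s => Ω i + (K / N) * ∑ j : Fin N, ψ i j *
          Real.sin (θ j s - θ i s + α))
        ((K / N) * ∑ j : Fin N, ψ i j *
          (Real.cos (θ j t - θ i t + α) * (deriv (θ j) t - deriv (θ i) t))) t := by
      refine HasDerivAt.const_add _ (HasDerivAt.const_mul _ ?_)
      refine HasDerivAt.fun_sum fun j _ => HasDerivAt.const_mul _ ?_
      have hu : HasDerivAt (fun s => θ j s - θ i s + α)
          (deriv (θ j) t - deriv (θ i) t) t :=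
        (((hd1 j t).hasDerivAt).sub ((hd1 i t).hasDerivAt)).add_const α
      exact (Real.hasDerivAt_sin _).comp t hu
    have := hL.deriv
    rw [heq.deriv_eq] at this
    rw [← this, hR.deriv]
  -- derivative of the combination
  have hA : HasDerivAt (comb c ρ (fun i => deriv (deriv (θ i))))
      ((∑ i : Fin N, c ^ (i:ℕ) * deriv (deriv (deriv (θ (ρ i)))) t
        - ∑ i : Fin N, c ^ (N-1-(i:ℕ)) * deriv (deriv (deriv (θ (ρ i)))) t) / Sc N c) t := by
    unfold comb
    exact ((HasDerivAt.fun_sum fun i _ => ((hd3 (ρ i) t).hasDerivAt).const_mul _).sub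
      (HasDerivAt.fun_sum fun i _ => ((hd3 (ρ i) t).hasDerivAt).const_mul _)).div_const _
  rw [hA.deriv]
  -- the bound on the forcing terms
  set D : ℝ := diam (fun j => deriv (θ j) t) with hDdef
  set b : Fin N → ℝ := fun i => (K / N) * ∑ j : Fin N, ψ i j *
      (Real.cos (θ j t - θ i t + α) * (deriv (θ j) t - deriv (θ i) t)) with hbdef
  have hbdd : BddAbove (Set.range fun j => deriv (θ j) t) :=
    (Set.finite_range _).bddAbove
  have hbdd' : BddBelow (Set.range fun j => deriv (θ j) t) :=
    (Set.finite_range _).bddBelow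
  have habs : ∀ i j : Fin N, |deriv (θ j) t - deriv (θ i) t| ≤ D := by
    intro i j
    rw [abs_le]
    constructor
    · have h1 : deriv (θ j) t ≥ ⨅ k, deriv (θ k) t := ciInf_le hbdd' j
      have h2 : deriv (θ i) t ≤ ⨆ k, deriv (θ k) t := le_ciSup hbdd i
      simp only [hDdef, diam]; linarith
    · have h1 : deriv (θ j) t ≤ ⨆ k, deriv (θ k) t := le_ciSup hbdd j
      have h2 : deriv (θ i) t ≥ ⨅ k, deriv (θ k) t := ciInf_le hbdd' i
      simp only [hDdef, diam]; linarith
  have hD0 : 0 ≤ D := by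
    have := habs ⟨0, by omega⟩ ⟨0, by omega⟩
    exact le_trans (abs_nonneg _) this
  have hb : ∀ i, |b i| ≤ K * ψu * D := by
    intro i
    have h1 : |∑ j : Fin N, ψ i j *
        (Real.cos (θ j t - θ i t + α) * (deriv (θ j) t - deriv (θ i) t))| ≤
        ∑ j : Fin N, ψu * D := by
      refine le_trans (Finset.abs_sum_le_sum_abs _ _) (Finset.sum_le_sum fun j _ => ?_)
      rw [abs_mul, abs_mul]
      have e1 : |ψ i j| ≤ ψu := by rw [abs_of_nonneg (hψ i j).1]; exact (hψ i j).2
      have e2 : |Real.cos (θ j t - θ i t + α)| * |deriv (θ j) t - deriv (θ i) t| ≤ 1 * D :=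
        mul_le_mul (Real.abs_cos_le_one _) (habs i j) (abs_nonneg _) zero_le_one
      calc |ψ i j| * (|Real.cos (θ j t - θ i t + α)| * |deriv (θ j) t - deriv (θ i) t|)
          ≤ ψu * (1 * D) := mul_le_mul e1 e2 (by positivity) hψu
        _ = ψu * D := by ring
    have h2 : ∑ j : Fin N, ψu * D = (N:ℝ) * (ψu * D) := by
      rw [Finset.sum_const, Finset.card_univ, Fintype.card_fin, nsmul_eq_mul]
    calc |b i| = |K / (N:ℝ)| * |∑ j : Fin N, ψ i j *
          (Real.cos (θ j t - θ i t + α) * (deriv (θ j) t - deriv (θ i) t))| := by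
          rw [hbdef]; exact abs_mul _ _
      _ ≤ (K / (N:ℝ)) * ((N:ℝ) * (ψu * D)) := by
          rw [abs_of_nonneg (by positivity : (0:ℝ) ≤ K / (N:ℝ))]
          exact mul_le_mul_of_nonneg_left (h1.trans h2.le) (by positivity)
      _ = K * ψu * D := by field_simp
  -- rewrite the left-hand side using the differentiated ODE
  have e1 : ∑ i : Fin N, c ^ (i:ℕ) * b (ρ i)
      = m * ∑ i : Fin N, c ^ (i:ℕ) * deriv (deriv (deriv (θ (ρ i)))) t
        + ∑ i : Fin N, c ^ (i:ℕ) * deriv (deriv (θ (ρ i))) t := by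
    rw [Finset.mul_sum, ← Finset.sum_add_distrib]
    exact Finset.sum_congr rfl fun i _ => by simp only [hbdef]; rw [← hkey (ρ i)]; ring
  have e2 : ∑ i : Fin N, c ^ (N-1-(i:ℕ)) * b (ρ i)
      = m * ∑ i : Fin N, c ^ (N-1-(i:ℕ)) * deriv (deriv (deriv (θ (ρ i)))) t
        + ∑ i : Fin N, c ^ (N-1-(i:ℕ)) * deriv (deriv (θ (ρ i))) t := by
    rw [Finset.mul_sum, ← Finset.sum_add_distrib]
    exact Finset.sum_congr rfl fun i _ => by simp only [hbdef]; rw [← hkey (ρ i)]; ring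
  have hLHS : m * ((∑ i : Fin N, c ^ (i:ℕ) * deriv (deriv (deriv (θ (ρ i)))) t
        - ∑ i : Fin N, c ^ (N-1-(i:ℕ)) * deriv (deriv (deriv (θ (ρ i)))) t) / Sc N c)
      + comb c ρ (fun i => deriv (deriv (θ i))) t
      = (∑ i : Fin N, c ^ (i:ℕ) * b (ρ i)
          - ∑ i : Fin N, c ^ (N-1-(i:ℕ)) * b (ρ i)) / Sc N c := by
    simp only [comb]
    rw [e1, e2]
    ring
  rw [hLHS]
  -- bound the combination of the forcing terms
  have hB1 : ∑ i : Fin N, c ^ (i:ℕ) * b (ρ i) ≤ Sc N c * (K * ψu * D) := by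
    calc ∑ i : Fin N, c ^ (i:ℕ) * b (ρ i)
        ≤ ∑ i : Fin N, c ^ (i:ℕ) * (K * ψu * D) :=
          Finset.sum_le_sum fun i _ => mul_le_mul_of_nonneg_left
            (le_of_abs_le (hb (ρ i))) (pow_nonneg hc0.le _)
      _ = Sc N c * (K * ψu * D) := by rw [← Finset.sum_mul, sum_pow_fst']
  have hB2 : -(Sc N c * (K * ψu * D)) ≤ ∑ i : Fin N, c ^ (N-1-(i:ℕ)) * b (ρ i) := by
    calc -(Sc N c * (K * ψu * D)) = ∑ i : Fin N, c ^ (N-1-(i:ℕ)) * (-(K * ψu * D)) := by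
          rw [← Finset.sum_mul, sum_pow_rev']; ring
      _ ≤ ∑ i : Fin N, c ^ (N-1-(i:ℕ)) * b (ρ i) :=
          Finset.sum_le_sum fun i _ => mul_le_mul_of_nonneg_left
            (neg_le_of_abs_le (hb (ρ i))) (pow_nonneg hc0.le _)
  have hE : (∑ i : Fin N, c ^ (i:ℕ) * b (ρ i)
      - ∑ i : Fin N, c ^ (N-1-(i:ℕ)) * b (ρ i)) / Sc N c ≤ 2 * (K * ψu * D) := by
    rw [div_le_iff₀ hS]
    nlinarith [hB1, hB2]
  -- conclude via the Yc lower bound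
  have hηpos : 0 < η := by
    rw [hη]
    have : 2/c < 1 := (div_lt_one hc0).2 (by linarith)
    linarith
  have hY : η * D ≤ Yc c (fun i => deriv (θ i) t) := by
    rw [hη]
    exact Yc_ge' hN hc _
  have hfin : 2 * (K * ψu * D) ≤ (2 * K * ψu / η) * Yc c (fun i => deriv (θ i) t) := by
    have hcoef : 0 ≤ 2 * K * ψu / η := by positivity
    calc 2 * (K * ψu * D) = (2 * K * ψu / η) * (η * D) := by
          field_simp
      _ ≤ (2 * K * ψu / η) * Yc c (fun i => deriv (θ i) t) :=
          mul_le_mul_of_nonneg_left hY hcoef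
  linarith
end

section
/- Let (θ, ω) be a solution of the inertial frustrated Kuramoto model on a symmetric connected network, with sufficient differentiability (ω_i', ω_i'' exist). Let D^∞ > 0 and δ satisfy α < δ and D^∞ + δ < π/2, and let c satisfy c·cos(D^∞ + δ) > 2. Let I be an open interval of times on which D_θ(t) ≤ D^∞, and let τ be a permutation of {1,…,N} such that ω_{τ(1)}(t) ≤ … ≤ ω_{τ(N)}(t) for all t ∈ I; define F(t) = (Σ_{i=1}^N c^{i−1}·ω_{τ(i)}(t) − Σ_{i=1}^N c^{N−i}·ω_{τ(i)}(t))/S_c. Then for every t ∈ I: m·F''(t) + F'(t) ≤ −(2K·ψ_l/(N·S_c))·F(t). -/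
open Real Finset

section Helpers

lemma cross_of_walk {V : Type*} {G : SimpleGraph V} (S : Set V) :
    ∀ {u v : V}, G.Walk u v → u ∈ S → v ∉ S → ∃ a b, a ∈ S ∧ b ∉ S ∧ G.Adj a b := by
  intro u v w
  induction w with
  | nil => intro hu hv; exact absurd hu hv
  | @cons a b c hab p ih =>
    intro hu hv
    by_cases hb : b ∈ S
    · exact ih hb hv
    · exact ⟨a, b, hu, hb, hab⟩

lemma exists_cross {V : Type*} {G : SimpleGraph V} (h : G.Preconnected) (S : Set V)
    {u v : V} (hu : u ∈ S) (hv : v ∉ S) : ∃ a b, a ∈ S ∧ b ∉ S ∧ G.Adj a b := by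
  obtain ⟨w⟩ := h u v
  exact cross_of_walk S w hu hv


lemma coef_bound {N : ℕ} {c γ : ℝ} (hγ0 : 0 < γ) (hγ1 : γ ≤ 1) (hcγ : 2 < c * γ)
    {Cij Cji : ℝ} (hCij1 : Cij ≤ 1) (hCjiγ : γ ≤ Cji) (hCijγ : γ ≤ Cij) (hCji1 : Cji ≤ 1)
    {i j : ℕ} (hij : i < j) (hj : j < N) :
    (c^i - c^(N-1-i)) * Cij - (c^j - c^(N-1-j)) * Cji ≤ -(c^(j-1) + c^(N-2-i)) := by
  have hc0 : 0 < c := by nlinarith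
  have hc1 : 1 ≤ c := by nlinarith
  have h1a : c^i * Cij ≤ c^(j-1) := by
    calc c^i * Cij ≤ c^i * 1 := mul_le_mul_of_nonneg_left hCij1 (by positivity)
      _ ≤ c^(j-1) := by rw [mul_one]; exact pow_le_pow_right₀ hc1 (by omega)
  have hj' : c^j = c * c^(j-1) := by rw [← pow_succ']; congr 1; omega
  have h1b : 2 * c^(j-1) ≤ c^j * Cji := by
    calc 2 * c^(j-1) ≤ (c*γ) * c^(j-1) := mul_le_mul_of_nonneg_right hcγ.le (by positivity)
      _ = c^j * γ := by rw [hj']; ring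
      _ ≤ c^j * Cji := mul_le_mul_of_nonneg_left hCjiγ (by positivity)
  have h2a : c^(N-1-j) * Cji ≤ c^(N-2-i) := by
    calc c^(N-1-j) * Cji ≤ c^(N-1-j) * 1 := mul_le_mul_of_nonneg_left hCji1 (by positivity)
      _ ≤ c^(N-2-i) := by rw [mul_one]; exact pow_le_pow_right₀ hc1 (by omega)
  have hi' : c^(N-1-i) = c * c^(N-2-i) := by rw [← pow_succ']; congr 1; omega
  have h2b : 2 * c^(N-2-i) ≤ c^(N-1-i) * Cij := by
    calc 2 * c^(N-2-i) ≤ (c*γ) * c^(N-2-i) := mul_le_mul_of_nonneg_right hcγ.le (by positivity)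
      _ = c^(N-1-i) * γ := by rw [hi']; ring
      _ ≤ c^(N-1-i) * Cij := mul_le_mul_of_nonneg_left hCijγ (by positivity)
  nlinarith [h1a, h1b, h2a, h2b]

open Finset

lemma Bk_bound {N k : ℕ} (hk : k + 1 < N) {c : ℝ} (hc : 2 < c) :
    2 * (∑ n ∈ Finset.Ico (k+1) N, (c^n - c^(N-1-n))) ≤
      (∑ n ∈ Finset.range N, c^n) * (c^k + c^(N-2-k)) := by
  have hc1 : c ≠ 1 := by linarith
  have hc0 : (0:ℝ) < c - 1 := by linarith
  have hkN : k + 1 ≤ N := hk.le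
  have hA : ∑ n ∈ Finset.Ico (k+1) N, c^n = (c^N - c^(k+1))/(c-1) :=
    geom_sum_Ico hc1 hkN
  have hB : ∑ n ∈ Finset.Ico (k+1) N, c^(N-1-n) = (c^(N-1-k) - 1)/(c-1) := by
    rw [Finset.sum_Ico_eq_sum_range]
    have h1 : N - (k+1) = N - 1 - k := by omega
    have h2 : ∀ i ∈ Finset.range (N-1-k), c^(N-1-(k+1+i)) = c^((N-1-k) - 1 - i) := by
      intro i hi; congr 1; omega
    rw [h1, Finset.sum_congr rfl h2, Finset.sum_range_reflect]
    exact geom_sum_eq hc1 _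
  have hS : ∑ n ∈ Finset.range N, c^n = (c^N - 1)/(c-1) := geom_sum_eq hc1 N
  rw [Finset.sum_sub_distrib, hA, hB, hS]
  set x := c^k with hxdef
  set y := c^(N-2-k) with hydef
  have hx : (1:ℝ) ≤ x := one_le_pow₀ (by linarith)
  have hy : (1:ℝ) ≤ y := one_le_pow₀ (by linarith)
  have hN2 : c^N = c^2 * x * y := by
    rw [hxdef, hydef, ← pow_add, ← pow_add]; congr 1; omega
  have hk1 : c^(k+1) = c * x := by rw [hxdef, ← pow_succ']
  have hNk : c^(N-1-k) = c * y := by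
    rw [hydef, ← pow_succ']; congr 1; omega
  rw [hN2, hk1, hNk]
  rw [div_sub_div_same, div_mul_eq_mul_div, mul_div_assoc', div_le_div_iff_of_pos_right hc0] 
  nlinarith [mul_nonneg (mul_nonneg (sq_nonneg c) (sub_nonneg.2 hx)) (sub_nonneg.2 hy),
    mul_pos (mul_pos (by positivity : (0:ℝ) < c^2) (by linarith : (0:ℝ) < x)) (by linarith : (0:ℝ) < y),
    mul_le_mul_of_nonneg_left hy (by positivity : (0:ℝ) ≤ c^2 * x),
    mul_le_mul_of_nonneg_left hx (by positivity : (0:ℝ) ≤ c^2 * y)]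


noncomputable def bb (N : ℕ) (c : ℝ) (i : Fin N) : ℝ := c ^ (i:ℕ) - c ^ (N - 1 - (i:ℕ))
noncomputable def kap (N : ℕ) (c : ℝ) (i j : Fin N) : ℝ :=
  c ^ (max (i:ℕ) (j:ℕ) - 1) + c ^ (N - 2 - min (i:ℕ) (j:ℕ))

noncomputable def gg {N : ℕ} (hN : 0 < N) (w : Fin N → ℝ) : ℕ → ℝ :=
  fun n => w ⟨min n (N-1), by omega⟩

lemma gg_eq {N : ℕ} (hN : 0 < N) (w : Fin N → ℝ) (i : Fin N) : gg hN w (i:ℕ) = w i := by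
  unfold gg; congr 1; exact Fin.ext (by simp; omega)

lemma gg_mono {N : ℕ} (hN : 0 < N) {w : Fin N → ℝ} (hw : Monotone w) : Monotone (gg hN w) := by
  intro a b hab
  exact hw (by simp [Fin.mk_le_mk]; omega)

lemma tel {N : ℕ} (hN : 0 < N) {w : Fin N → ℝ} (hw : Monotone w) (i j : Fin N)
    (hij : (i:ℕ) ≤ (j:ℕ)) :
    w j - w i = ∑ k ∈ Finset.Ico (i:ℕ) (j:ℕ), (gg hN w (k+1) - gg hN w k) := by
  rw [Finset.sum_Ico_eq_sub _ hij, Finset.sum_range_sub (gg hN w),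
    Finset.sum_range_sub (gg hN w), gg_eq, gg_eq]
  ring

lemma bb_sum_zero {N : ℕ} (c : ℝ) : ∑ i : Fin N, bb N c i = 0 := by
  unfold bb
  rw [Finset.sum_sub_distrib, Fin.sum_univ_eq_sum_range (fun n => c^n),
    Fin.sum_univ_eq_sum_range (fun n => c^(N-1-n)),
    Finset.sum_range_reflect (fun n => c^n) N, sub_self]

lemma abel {N : ℕ} (hN0 : 0 < N) (c : ℝ) (w : Fin N → ℝ) :
    ∑ i : Fin N, bb N c i * w i =
      ∑ k ∈ Finset.range (N-1),
        (∑ n ∈ Finset.Ico (k+1) N, (c^n - c^(N-1-n))) * (gg hN0 w (k+1) - gg hN0 w k) := by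
  classical
  have step1 : ∑ i : Fin N, bb N c i * w i
      = ∑ i : Fin N, bb N c i * (w i - w ⟨0, hN0⟩) := by
    simp only [mul_sub, Finset.sum_sub_distrib, ← Finset.sum_mul, bb_sum_zero, zero_mul,
      sub_zero]
  rw [step1]
  have step2 : ∀ i : Fin N, bb N c i * (w i - w ⟨0, hN0⟩)
      = ∑ k ∈ Finset.range (N-1), (if k < (i:ℕ) then bb N c i * (gg hN0 w (k+1) - gg hN0 w k) else 0) := by
    intro i
    have htel : w i - w ⟨0, hN0⟩
        = ∑ k ∈ Finset.Ico (0:ℕ) (i:ℕ), (gg hN0 w (k+1) - gg hN0 w k) := by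
      have h0 : ((⟨0, hN0⟩ : Fin N) : ℕ) = 0 := rfl
      have := Finset.sum_Ico_eq_sub (fun k => gg hN0 w (k+1) - gg hN0 w k)
        (Nat.zero_le (i:ℕ))
      rw [this, Finset.sum_range_sub (gg hN0 w), Finset.sum_range_sub (gg hN0 w),
        gg_eq]
      simp [gg]
    rw [htel, Nat.Ico_zero_eq_range, Finset.mul_sum]
    rw [← Finset.sum_filter]
    congr 1
    ext k
    simp only [Finset.mem_filter, Finset.mem_range]
    omega
  rw [Finset.sum_congr rfl (fun i _ => step2 i), Finset.sum_comm]
  refine Finset.sum_congr rfl (fun k hk => ?_)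
  have : ∀ i : Fin N, (if k < (i:ℕ) then bb N c i * (gg hN0 w (k+1) - gg hN0 w k) else 0)
      = (if k < (i:ℕ) then bb N c i else 0) * (gg hN0 w (k+1) - gg hN0 w k) := by
    intro i; split_ifs <;> simp
  rw [Finset.sum_congr rfl (fun i _ => this i), ← Finset.sum_mul]
  congr 1
  unfold bb
  rw [Fin.sum_univ_eq_sum_range (fun n => if k < n then c^n - c^(N-1-n) else 0),
    ← Finset.sum_filter]
  congr 1
  ext n
  simp only [Finset.mem_filter, Finset.mem_range, Finset.mem_Ico]
  omega

lemma pair_expand {N : ℕ} (hN0 : 0 < N) (c : ℝ) {w : Fin N → ℝ} (hw : Monotone w)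
    (P : ℝ) (i j : Fin N) :
    P * (kap N c i j * |w j - w i|)
      = ∑ k ∈ Finset.range (N-1),
          (if min (i:ℕ) (j:ℕ) ≤ k ∧ k < max (i:ℕ) (j:ℕ) then
            P * (kap N c i j * (gg hN0 w (k+1) - gg hN0 w k)) else 0) := by
  classical
  have hiN : (i:ℕ) < N := i.isLt
  have hjN : (j:ℕ) < N := j.isLt
  have habs : |w j - w i| = ∑ k ∈ Finset.Ico (min (i:ℕ) (j:ℕ)) (max (i:ℕ) (j:ℕ)),
      (gg hN0 w (k+1) - gg hN0 w k) := by
    rcases le_total (i:ℕ) (j:ℕ) with h | h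
    · rw [abs_of_nonneg (sub_nonneg.2 (hw (Fin.le_def.2 h))), Nat.min_eq_left h,
        Nat.max_eq_right h]
      exact tel hN0 hw i j h
    · rw [abs_of_nonpos (sub_nonpos.2 (hw (Fin.le_def.2 h))), neg_sub, Nat.min_eq_right h,
        Nat.max_eq_left h]
      exact tel hN0 hw j i h
  rw [habs, Finset.mul_sum, Finset.mul_sum]
  rw [← Finset.sum_filter]
  apply Finset.sum_congr
  · ext k
    simp only [Finset.mem_filter, Finset.mem_range, Finset.mem_Ico]
    omega
  · intro k _; rfl

lemma keyD {N : ℕ} (hN : 2 ≤ N) {c ψl : ℝ} (hc : 2 < c) (hψl : 0 < ψl)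
    {w : Fin N → ℝ} (hw : Monotone w)
    (Ψ : Fin N → Fin N → ℝ) (hΨsym : ∀ i j, Ψ i j = Ψ j i) (hΨnn : ∀ i j, 0 ≤ Ψ i j)
    (hcut : ∀ k : ℕ, k + 1 < N → ∃ i j : Fin N, (i:ℕ) ≤ k ∧ k < (j:ℕ) ∧ ψl ≤ Ψ i j) :
    4 * ψl / (∑ n ∈ Finset.range N, c^n) * ∑ i : Fin N, bb N c i * w i ≤
      ∑ i : Fin N, ∑ j : Fin N, Ψ i j * (kap N c i j * |w j - w i|) := by
  classical
  have hN0 : 0 < N := by omega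
  have hc0 : (0:ℝ) < c := by linarith
  have hc1 : (1:ℝ) ≤ c := by linarith
  set S : ℝ := ∑ n ∈ Finset.range N, c^n with hSdef
  have hS : 0 < S :=
    Finset.sum_pos (fun n _ => by positivity) (Finset.nonempty_range_iff.2 (by omega))
  have hRHS : ∑ i : Fin N, ∑ j : Fin N, Ψ i j * (kap N c i j * |w j - w i|)
      = ∑ k ∈ Finset.range (N-1), ∑ i : Fin N, ∑ j : Fin N,
          (if min (i:ℕ) (j:ℕ) ≤ k ∧ k < max (i:ℕ) (j:ℕ) then
            Ψ i j * (kap N c i j * (gg hN0 w (k+1) - gg hN0 w k)) else 0) := by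
    rw [Finset.sum_congr rfl (fun i _ => Finset.sum_congr rfl
      (fun j _ => pair_expand hN0 c hw (Ψ i j) i j))]
    rw [Finset.sum_congr rfl (fun i _ => Finset.sum_comm), Finset.sum_comm]
  rw [hRHS, abel hN0 c w, Finset.mul_sum]
  apply Finset.sum_le_sum
  intro k hk
  have hkN : k + 1 < N := by simp only [Finset.mem_range] at hk; omega
  obtain ⟨i0, j0, hi0, hj0, hΨ0⟩ := hcut k hkN
  set d : ℝ := gg hN0 w (k+1) - gg hN0 w k with hd
  have hd0 : 0 ≤ d := sub_nonneg.2 (gg_mono hN0 hw (by omega))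
  set B : ℝ := ∑ n ∈ Finset.Ico (k+1) N, (c^n - c^(N-1-n)) with hB'
  set y : ℝ := c^k + c^(N-2-k) with hy
  have hy0 : 0 ≤ y := by rw [hy]; positivity
  have hnn : ∀ i j : Fin N, 0 ≤ (if min (i:ℕ) (j:ℕ) ≤ k ∧ k < max (i:ℕ) (j:ℕ) then
      Ψ i j * (kap N c i j * d) else 0) := by
    intro i j
    split_ifs with h
    · have hk0 : 0 ≤ kap N c i j := by unfold kap; positivity
      exact mul_nonneg (hΨnn i j) (mul_nonneg hk0 hd0)
    · exact le_rfl
  have hterm : ∀ a b : Fin N, min (a:ℕ) (b:ℕ) ≤ k → k < max (a:ℕ) (b:ℕ) → ψl ≤ Ψ a b →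
      ψl * (y * d) ≤ (if min (a:ℕ) (b:ℕ) ≤ k ∧ k < max (a:ℕ) (b:ℕ) then
        Ψ a b * (kap N c a b * d) else 0) := by
    intro a b ha hb hΨab
    rw [if_pos ⟨ha, hb⟩]
    have hkap : y ≤ kap N c a b := by
      rw [hy]; unfold kap
      exact add_le_add (pow_le_pow_right₀ hc1 (by omega)) (pow_le_pow_right₀ hc1 (by omega))
    calc ψl * (y * d) ≤ Ψ a b * (y * d) :=
          mul_le_mul_of_nonneg_right hΨab (mul_nonneg hy0 hd0)
      _ ≤ Ψ a b * (kap N c a b * d) :=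
          mul_le_mul_of_nonneg_left (mul_le_mul_of_nonneg_right hkap hd0)
            (le_trans hψl.le hΨab)
  have hij' : i0 ≠ j0 := by
    intro h
    rw [h] at hi0
    omega
  have hpair : ψl * (y * d) + ψl * (y * d) ≤ ∑ i : Fin N, ∑ j : Fin N,
      (if min (i:ℕ) (j:ℕ) ≤ k ∧ k < max (i:ℕ) (j:ℕ) then
        Ψ i j * (kap N c i j * d) else 0) := by
    have t1 : ψl * (y * d) ≤ ∑ j : Fin N,
        (if min (i0:ℕ) (j:ℕ) ≤ k ∧ k < max (i0:ℕ) (j:ℕ) then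
          Ψ i0 j * (kap N c i0 j * d) else 0) :=
      le_trans (hterm i0 j0 (by omega) (by omega) hΨ0)
        (Finset.single_le_sum (fun j _ => hnn i0 j) (Finset.mem_univ j0))
    have t2 : ψl * (y * d) ≤ ∑ j : Fin N,
        (if min (j0:ℕ) (j:ℕ) ≤ k ∧ k < max (j0:ℕ) (j:ℕ) then
          Ψ j0 j * (kap N c j0 j * d) else 0) :=
      le_trans (hterm j0 i0 (by omega) (by omega) ((hΨsym i0 j0) ▸ hΨ0))
        (Finset.single_le_sum (fun j _ => hnn j0 j) (Finset.mem_univ i0))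
    calc ψl * (y * d) + ψl * (y * d)
        ≤ _ + _ := add_le_add t1 t2
      _ = ∑ i ∈ ({i0, j0} : Finset (Fin N)), ∑ j : Fin N,
          (if min (i:ℕ) (j:ℕ) ≤ k ∧ k < max (i:ℕ) (j:ℕ) then
            Ψ i j * (kap N c i j * d) else 0) := by rw [Finset.sum_pair hij']
      _ ≤ _ := Finset.sum_le_sum_of_subset_of_nonneg (Finset.subset_univ _)
          (fun i _ _ => Finset.sum_nonneg (fun j _ => hnn i j))
  have hBk : 2 * B ≤ S * y := by rw [hSdef, hB', hy]; exact Bk_bound hkN hc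
  have hA : 4 * ψl / S * (B * d) ≤ ψl * (y * d) + ψl * (y * d) := by
    have h2 : (0:ℝ) ≤ 2 * ψl / S * d :=
      mul_nonneg (div_nonneg (by linarith) hS.le) hd0
    have h3 := mul_le_mul_of_nonneg_left hBk h2
    have h4 : 2 * ψl / S * d * (S * y) = ψl * (y * d) + ψl * (y * d) := by
      field_simp
      ring
    calc 4 * ψl / S * (B * d)
        = 2 * ψl / S * d * (2 * B) := by ring
      _ ≤ 2 * ψl / S * d * (S * y) := h3
      _ = ψl * (y * d) + ψl * (y * d) := h4
  exact le_trans hA hpair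

lemma main_ineq {N : ℕ} (hN : 2 ≤ N) {c γ ψl : ℝ} (hγ0 : 0 < γ) (hγ1 : γ ≤ 1)
    (hcγ : 2 < c * γ) (hψl : 0 < ψl)
    {w : Fin N → ℝ} (hw : Monotone w)
    (Ψ C : Fin N → Fin N → ℝ)
    (hΨsym : ∀ i j, Ψ i j = Ψ j i) (hΨnn : ∀ i j, 0 ≤ Ψ i j)
    (hCγ : ∀ i j, γ ≤ C i j) (hC1 : ∀ i j, C i j ≤ 1)
    (hcut : ∀ k : ℕ, k + 1 < N → ∃ i j : Fin N, (i:ℕ) ≤ k ∧ k < (j:ℕ) ∧ ψl ≤ Ψ i j) :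
    ∑ i : Fin N, bb N c i * (∑ j : Fin N, Ψ i j * (C i j * (w j - w i))) ≤
      -(2 * ψl / (∑ n ∈ Finset.range N, c^n)) * ∑ i : Fin N, bb N c i * w i := by
  classical
  have hc0 : (0:ℝ) < c := by nlinarith
  have hc : (2:ℝ) < c := by nlinarith [mul_le_mul_of_nonneg_left hγ1 hc0.le]
  have hc1 : (1:ℝ) ≤ c := by linarith
  set S : ℝ := ∑ n ∈ Finset.range N, c^n with hSdef
  have hS : 0 < S :=
    Finset.sum_pos (fun n _ => by positivity) (Finset.nonempty_range_iff.2 (by omega))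
  set f : Fin N → Fin N → ℝ :=
    fun i j => bb N c i * (Ψ i j * (C i j * (w j - w i))) with hf
  set h : Fin N → Fin N → ℝ :=
    fun i j => Ψ i j * (kap N c i j * |w j - w i|) with hh
  have key : ∀ i j : Fin N, (i:ℕ) < (j:ℕ) → f i j + f j i ≤ -(h i j) := by
    intro i j hij
    have hd0 : 0 ≤ w j - w i := sub_nonneg.2 (hw (Fin.le_def.2 hij.le))
    have hcoef : bb N c i * C i j - bb N c j * C j i
        ≤ -(c^((j:ℕ)-1) + c^(N-2-(i:ℕ))) := by
      unfold bb
      exact coef_bound hγ0 hγ1 hcγ (hC1 i j) (hCγ j i) (hCγ i j) (hC1 j i) hij j.isLt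
    have hkapv : kap N c i j = c^((j:ℕ)-1) + c^(N-2-(i:ℕ)) := by
      unfold kap
      rw [Nat.max_eq_right hij.le, Nat.min_eq_left hij.le]
    have step1 : f i j + f j i = Ψ i j * ((bb N c i * C i j - bb N c j * C j i) * (w j - w i)) := by
      rw [hf]
      simp only []
      rw [hΨsym j i]
      ring
    have habs : |w j - w i| = w j - w i := abs_of_nonneg hd0
    rw [step1, hh]
    simp only []
    rw [habs, hkapv]
    have : (bb N c i * C i j - bb N c j * C j i) * (w j - w i)
        ≤ -(c^((j:ℕ)-1) + c^(N-2-(i:ℕ))) * (w j - w i) :=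
      mul_le_mul_of_nonneg_right hcoef hd0
    calc Ψ i j * ((bb N c i * C i j - bb N c j * C j i) * (w j - w i))
        ≤ Ψ i j * (-(c^((j:ℕ)-1) + c^(N-2-(i:ℕ))) * (w j - w i)) :=
          mul_le_mul_of_nonneg_left this (hΨnn i j)
      _ = -(Ψ i j * ((c^((j:ℕ)-1) + c^(N-2-(i:ℕ))) * (w j - w i))) := by ring
  have keyall : ∀ i j : Fin N, f i j + f j i ≤ -(h i j) := by
    intro i j
    rcases lt_trichotomy (i:ℕ) (j:ℕ) with hij | hij | hij
    · exact key i j hij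
    · have : i = j := Fin.ext hij
      subst this
      have hf0 : f i i = 0 := by rw [hf]; simp
      have hh0 : h i i = 0 := by rw [hh]; simp
      rw [hf0, hh0]; norm_num
    · have e1 : f i j + f j i = f j i + f i j := by ring
      have e2 : h i j = h j i := by
        rw [hh]; simp only []
        rw [hΨsym i j, abs_sub_comm]
        unfold kap
        rw [max_comm, min_comm]
      rw [e1, e2]
      exact key j i hij
  have hdouble : (∑ i : Fin N, ∑ j : Fin N, f i j) + (∑ i : Fin N, ∑ j : Fin N, f i j)
      ≤ -(∑ i : Fin N, ∑ j : Fin N, h i j) := by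
    have hswap : ∑ i : Fin N, ∑ j : Fin N, f j i = ∑ i : Fin N, ∑ j : Fin N, f i j :=
      Finset.sum_comm
    calc (∑ i : Fin N, ∑ j : Fin N, f i j) + (∑ i : Fin N, ∑ j : Fin N, f i j)
        = (∑ i : Fin N, ∑ j : Fin N, f i j) + (∑ i : Fin N, ∑ j : Fin N, f j i) := by
          rw [hswap]
      _ = ∑ i : Fin N, ∑ j : Fin N, (f i j + f j i) := by
          rw [← Finset.sum_add_distrib]
          exact Finset.sum_congr rfl (fun i _ => Finset.sum_add_distrib.symm)
      _ ≤ ∑ i : Fin N, ∑ j : Fin N, -(h i j) :=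
          Finset.sum_le_sum (fun i _ => Finset.sum_le_sum (fun j _ => keyall i j))
      _ = -(∑ i : Fin N, ∑ j : Fin N, h i j) := by
          simp only [Finset.sum_neg_distrib]
  have hD : 4 * ψl / S * ∑ i : Fin N, bb N c i * w i
      ≤ ∑ i : Fin N, ∑ j : Fin N, h i j := keyD hN hc hψl hw Ψ hΨsym hΨnn hcut
  have hgoal : ∑ i : Fin N, ∑ j : Fin N, f i j
      ≤ -(2 * ψl / S) * ∑ i : Fin N, bb N c i * w i := by
    have h2 : (∑ i : Fin N, ∑ j : Fin N, f i j) + (∑ i : Fin N, ∑ j : Fin N, f i j)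
        ≤ -(4 * ψl / S * ∑ i : Fin N, bb N c i * w i) := le_trans hdouble (neg_le_neg hD)
    have e : (4:ℝ) * ψl / S * ∑ i : Fin N, bb N c i * w i
        = 2 * ((2 * ψl / S) * ∑ i : Fin N, bb N c i * w i) := by ring
    linarith
  calc ∑ i : Fin N, bb N c i * (∑ j : Fin N, Ψ i j * (C i j * (w j - w i)))
      = ∑ i : Fin N, ∑ j : Fin N, f i j := by
        refine Finset.sum_congr rfl (fun i _ => ?_)
        rw [Finset.mul_sum]
    _ ≤ -(2 * ψl / S) * ∑ i : Fin N, bb N c i * w i := hgoal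

end Helpers

/-- second-order dissipative differential inequality for the frequency
combination `F` once the phase diameter is at most `D^∞`. -/
theorem stmt14 {N : ℕ} (hN : 2 ≤ N) (m K α : ℝ) (hm : 0 < m) (hK : 0 < K)
    (hα0 : 0 < α) (hα : α < π / 2)
    (Ω : Fin N → ℝ) (ψ : Fin N → Fin N → ℝ)
    (hψsym : ∀ i j, ψ i j = ψ j i) (hψnn : ∀ i j, 0 ≤ ψ i j)
    (hconn : (netGraph ψ).Connected)
    (ψu ψl : ℝ)
    (hψu : IsGreatest {x | ∃ i j, (netGraph ψ).Adj i j ∧ ψ i j = x} ψu)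
    (hψl : IsLeast {x | ∃ i j, (netGraph ψ).Adj i j ∧ ψ i j = x} ψl)
    (θ : Fin N → ℝ → ℝ) (hsmooth : ∀ i, ContDiff ℝ 3 (θ i))
    (hode : ∀ i, ∀ t : ℝ, 0 ≤ t →
      m * deriv (deriv (θ i)) t + deriv (θ i) t =
        Ω i + (K / N) * ∑ j : Fin N, ψ i j * Real.sin (θ j t - θ i t + α))
    (Dinf δ c : ℝ) (hD : 0 < Dinf) (hαδ : α < δ) (hDδ : Dinf + δ < π / 2)
    (hcc : 2 < c * Real.cos (Dinf + δ))
    (t1 t2 : ℝ) (ht1 : 0 ≤ t1)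
    (hdiam : ∀ t ∈ Set.Ioo t1 t2, diam (fun i => θ i t) ≤ Dinf)
    (τ : Equiv.Perm (Fin N))
    (hord : ∀ t ∈ Set.Ioo t1 t2, Monotone fun i => deriv (θ (τ i)) t) :
    ∀ t ∈ Set.Ioo t1 t2,
      m * deriv (deriv (comb c τ (fun i => deriv (θ i)))) t
          + deriv (comb c τ (fun i => deriv (θ i))) t ≤
        - (2 * K * ψl / (N * Sc N c)) * comb c τ (fun i => deriv (θ i)) t := by
  intro t ht
  obtain ⟨hta, htb⟩ := ht
  have htpos : 0 < t := lt_of_le_of_lt ht1 hta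
  -- differentiability ladder
  have hθd : ∀ i, Differentiable ℝ (θ i) := fun i => (hsmooth i).differentiable (by norm_num)
  have hω2 : ∀ i, ContDiff ℝ 2 (deriv (θ i)) := by
    intro i
    have h' : ContDiff ℝ (2+1) (θ i) := by exact_mod_cast hsmooth i
    exact (contDiff_succ_iff_deriv.1 h').2.2
  have hωd : ∀ i, Differentiable ℝ (deriv (θ i)) := fun i =>
    (hω2 i).differentiable (by norm_num)
  have hω1 : ∀ i, ContDiff ℝ 1 (deriv (deriv (θ i))) := by
    intro i
    have h' : ContDiff ℝ (1+1) (deriv (θ i)) := by exact_mod_cast hω2 i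
    exact (contDiff_succ_iff_deriv.1 h').2.2
  have hωdd : ∀ i, Differentiable ℝ (deriv (deriv (θ i))) := fun i =>
    (hω1 i).differentiable (by norm_num)
  -- constants
  set γ : ℝ := Real.cos (Dinf + δ) with hγdef
  have hγ0 : 0 < γ := Real.cos_pos_of_mem_Ioo ⟨by nlinarith [Real.pi_pos], hDδ⟩
  have hγ1 : γ ≤ 1 := Real.cos_le_one _
  have hc0 : (0:ℝ) < c := by nlinarith
  have hc2 : (2:ℝ) < c := by nlinarith [mul_le_mul_of_nonneg_left hγ1 hc0.le]
  have hSc : 0 < Sc N c := by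
    unfold Sc
    exact Finset.sum_pos (fun n _ => by positivity) (Finset.nonempty_range_iff.2 (by omega))
  have hN0R : (0:ℝ) < (N:ℝ) := by exact_mod_cast (by omega : 0 < N)
  have hψl0 : 0 < ψl := by
    obtain ⟨a, b, hadj, hval⟩ := hψl.1
    exact hval ▸ hadj.2.1
  -- data at time t
  set w : Fin N → ℝ := fun i => deriv (θ (τ i)) t with hwdef
  have hw : Monotone w := hord t ⟨hta, htb⟩
  set Ψ : Fin N → Fin N → ℝ := fun i j => ψ (τ i) (τ j) with hΨdef
  set C : Fin N → Fin N → ℝ := fun i j => Real.cos (θ (τ j) t - θ (τ i) t + α) with hCdef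
  have hΨsym' : ∀ i j, Ψ i j = Ψ j i := fun i j => hψsym (τ i) (τ j)
  have hΨnn' : ∀ i j, 0 ≤ Ψ i j := fun i j => hψnn (τ i) (τ j)
  have hsup : ∀ a b : Fin N, θ a t - θ b t ≤ Dinf := by
    intro a b
    have h1 : θ a t ≤ ⨆ i, θ i t :=
      le_ciSup (f := fun i => θ i t) (Set.Finite.bddAbove (Set.finite_range _)) a
    have h2 : ⨅ i, θ i t ≤ θ b t :=
      ciInf_le (f := fun i => θ i t) (Set.Finite.bddBelow (Set.finite_range _)) b
    have h3 := hdiam t ⟨hta, htb⟩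
    unfold diam at h3
    linarith
  have hC1 : ∀ i j, C i j ≤ 1 := fun i j => Real.cos_le_one _
  have hCγ : ∀ i j, γ ≤ C i j := by
    intro i j
    have habs : |θ (τ j) t - θ (τ i) t + α| ≤ Dinf + δ := by
      rw [abs_le]
      constructor
      · have := hsup (τ i) (τ j); linarith
      · have := hsup (τ j) (τ i); linarith
    calc γ = Real.cos (Dinf + δ) := hγdef
      _ ≤ Real.cos |θ (τ j) t - θ (τ i) t + α| :=
          Real.cos_le_cos_of_nonneg_of_le_pi (abs_nonneg _) (by nlinarith [Real.pi_pos]) habs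
      _ = C i j := by rw [Real.cos_abs]
  have hcut' : ∀ k : ℕ, k + 1 < N → ∃ i j : Fin N, (i:ℕ) ≤ k ∧ k < (j:ℕ) ∧ ψl ≤ Ψ i j := by
    intro k hk
    have hu : τ ⟨0, by omega⟩ ∈ {v : Fin N | ((τ.symm v : Fin N) : ℕ) ≤ k} := by
      simp only [Set.mem_setOf_eq, Equiv.symm_apply_apply]
      omega
    have hv : τ ⟨N-1, by omega⟩ ∉ {v : Fin N | ((τ.symm v : Fin N) : ℕ) ≤ k} := by
      simp only [Set.mem_setOf_eq, Equiv.symm_apply_apply]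
      omega
    obtain ⟨a, b, ha, hb, hadj⟩ := exists_cross hconn.preconnected _ hu hv
    refine ⟨τ.symm a, τ.symm b, ha, not_le.1 hb, ?_⟩
    have hval : Ψ (τ.symm a) (τ.symm b) = ψ a b := by
      rw [hΨdef]
      simp [Equiv.apply_symm_apply]
    rw [hval]
    exact hψl.2 ⟨a, b, hadj, rfl⟩
  -- derivatives of the combination
  set G : ℝ → ℝ := fun s =>
    (∑ i : Fin N, c ^ (i:ℕ) * deriv (deriv (θ (τ i))) s
      - ∑ i : Fin N, c ^ (N-1-(i:ℕ)) * deriv (deriv (θ (τ i))) s) / Sc N c with hGdef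
  have hF1 : ∀ s, HasDerivAt (comb c τ (fun i => deriv (θ i))) (G s) s := by
    intro s
    rw [hGdef]
    unfold comb
    apply HasDerivAt.div_const
    apply HasDerivAt.sub <;>
    · apply HasDerivAt.fun_sum
      intro i _
      exact ((hωd (τ i) s).hasDerivAt).const_mul _
  have hG1 : ∀ s, HasDerivAt G
      ((∑ i : Fin N, c ^ (i:ℕ) * deriv (deriv (deriv (θ (τ i)))) s
        - ∑ i : Fin N, c ^ (N-1-(i:ℕ)) * deriv (deriv (deriv (θ (τ i)))) s) / Sc N c) s := by
    intro s
    rw [hGdef]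
    apply HasDerivAt.div_const
    apply HasDerivAt.sub <;>
    · apply HasDerivAt.fun_sum
      intro i _
      exact ((hωdd (τ i) s).hasDerivAt).const_mul _
  have hDF : deriv (comb c τ fun i => deriv (θ i)) = G := funext fun s => (hF1 s).deriv
  -- differentiated ODE at t
  have hODE' : ∀ a : Fin N,
      m * deriv (deriv (deriv (θ a))) t + deriv (deriv (θ a)) t
        = (K/(N:ℝ)) * ∑ j : Fin N, ψ a j * (Real.cos (θ j t - θ a t + α) *
            (deriv (θ j) t - deriv (θ a) t)) := by
    intro a
    have hL : HasDerivAt (fun u => m * deriv (deriv (θ a)) u + deriv (θ a) u)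
        (m * deriv (deriv (deriv (θ a))) t + deriv (deriv (θ a)) t) t :=
      (((hωdd a) t).hasDerivAt.const_mul m).add ((hωd a) t).hasDerivAt
    have hR : HasDerivAt
        (fun u => Ω a + (K/(N:ℝ)) * ∑ j : Fin N, ψ a j * Real.sin (θ j u - θ a u + α))
        ((K/(N:ℝ)) * ∑ j : Fin N, ψ a j * (Real.cos (θ j t - θ a t + α) *
          (deriv (θ j) t - deriv (θ a) t))) t := by
      apply HasDerivAt.const_add
      apply HasDerivAt.const_mul
      apply HasDerivAt.fun_sum
      intro j _
      have h1 : HasDerivAt (fun u => θ j u - θ a u + α)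
          (deriv (θ j) t - deriv (θ a) t) t :=
        (((hθd j) t).hasDerivAt.sub ((hθd a) t).hasDerivAt).add_const α
      exact ((Real.hasDerivAt_sin (θ j t - θ a t + α)).comp t h1).const_mul (ψ a j)
    have heq : (fun u => m * deriv (deriv (θ a)) u + deriv (θ a) u)
        =ᶠ[nhds t] (fun u => Ω a + (K/(N:ℝ)) * ∑ j : Fin N, ψ a j * Real.sin (θ j u - θ a u + α)) := by
      filter_upwards [eventually_gt_nhds htpos] with u hu
      exact hode a u hu.le
    have hde := heq.deriv_eq
    rw [hL.deriv, hR.deriv] at hde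
    exact hde
  -- assemble the left-hand side
  have hLHS : m * deriv (deriv (comb c τ fun i => deriv (θ i))) t
      + deriv (comb c τ fun i => deriv (θ i)) t
      = (K/(N:ℝ)) * (∑ i : Fin N, bb N c i * (∑ j : Fin N, Ψ i j * (C i j * (w j - w i)))) / Sc N c := by
    rw [hDF, (hG1 t).deriv, hGdef]
    simp only []
    rw [← mul_div_assoc, ← add_div]
    congr 1
    have hper : ∀ i : Fin N,
        m * deriv (deriv (deriv (θ (τ i)))) t + deriv (deriv (θ (τ i))) t
          = (K/(N:ℝ)) * ∑ j : Fin N, Ψ i j * (C i j * (w j - w i)) := by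
      intro i
      rw [hODE' (τ i)]
      congr 1
      rw [← Equiv.sum_comp τ (fun j' => ψ (τ i) j' * (Real.cos (θ j' t - θ (τ i) t + α) *
        (deriv (θ j') t - deriv (θ (τ i)) t)))]
    calc m * (∑ i : Fin N, c ^ (i:ℕ) * deriv (deriv (deriv (θ (τ i)))) t
            - ∑ i : Fin N, c ^ (N-1-(i:ℕ)) * deriv (deriv (deriv (θ (τ i)))) t)
          + (∑ i : Fin N, c ^ (i:ℕ) * deriv (deriv (θ (τ i))) t
            - ∑ i : Fin N, c ^ (N-1-(i:ℕ)) * deriv (deriv (θ (τ i))) t)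
        = ∑ i : Fin N, (m * (c ^ (i:ℕ) * deriv (deriv (deriv (θ (τ i)))) t)
            + c ^ (i:ℕ) * deriv (deriv (θ (τ i))) t)
          - ∑ i : Fin N, (m * (c ^ (N-1-(i:ℕ)) * deriv (deriv (deriv (θ (τ i)))) t)
            + c ^ (N-1-(i:ℕ)) * deriv (deriv (θ (τ i))) t) := by
          rw [Finset.sum_add_distrib, Finset.sum_add_distrib, ← Finset.mul_sum, ← Finset.mul_sum]
          ring
      _ = ∑ i : Fin N, ((m * (c ^ (i:ℕ) * deriv (deriv (deriv (θ (τ i)))) t)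
            + c ^ (i:ℕ) * deriv (deriv (θ (τ i))) t)
          - (m * (c ^ (N-1-(i:ℕ)) * deriv (deriv (deriv (θ (τ i)))) t)
            + c ^ (N-1-(i:ℕ)) * deriv (deriv (θ (τ i))) t)) := by rw [Finset.sum_sub_distrib]
      _ = ∑ i : Fin N, bb N c i * (m * deriv (deriv (deriv (θ (τ i)))) t
            + deriv (deriv (θ (τ i))) t) :=
          Finset.sum_congr rfl (fun i _ => by unfold bb; ring)
      _ = ∑ i : Fin N, bb N c i * ((K/(N:ℝ)) * ∑ j : Fin N, Ψ i j * (C i j * (w j - w i))) :=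
          Finset.sum_congr rfl (fun i _ => by rw [hper i])
      _ = K/(N:ℝ) * ∑ i : Fin N, bb N c i * ∑ j : Fin N, Ψ i j * (C i j * (w j - w i)) := by
          rw [Finset.mul_sum]
          exact Finset.sum_congr rfl (fun i _ => by ring)
  -- apply the core inequality
  have hmain := main_ineq hN hγ0 hγ1 hcc hψl0 hw Ψ C hΨsym' hΨnn' hCγ hC1 hcut'
  have hFt : comb c τ (fun i => deriv (θ i)) t
      = (∑ i : Fin N, bb N c i * w i) / Sc N c := by
    unfold comb
    congr 1
    rw [← Finset.sum_sub_distrib]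
    exact Finset.sum_congr rfl (fun i _ => by unfold bb; ring)
  rw [hLHS, hFt]
  have hSeq : (∑ n ∈ Finset.range N, c^n) = Sc N c := rfl
  rw [hSeq] at hmain
  calc (K/(N:ℝ)) * (∑ i : Fin N, bb N c i * ∑ j : Fin N, Ψ i j * (C i j * (w j - w i))) / Sc N c
      ≤ (K/(N:ℝ)) * (-(2*ψl/Sc N c) * ∑ i : Fin N, bb N c i * w i) / Sc N c := by
        rw [div_le_div_iff_of_pos_right hSc]
        exact mul_le_mul_of_nonneg_left hmain (div_nonneg hK.le hN0R.le)
    _ = -(2*K*ψl/((N:ℝ)*Sc N c)) * ((∑ i : Fin N, bb N c i * w i) / Sc N c) := by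
        field_simp
end

section
/- Let ω_1 ≤ ω_2 ≤ … ≤ ω_N and θ_1, …, θ_N be real numbers with max_{i,j} |θ_j − θ_i| ≤ D^∞, where 0 < α < δ, D^∞ + δ < π/2, and c·cos(D^∞ + δ) > 2. Let (ψ_{ij}) be a symmetric N × N matrix with ψ_{ij} ≥ 0. Then Σ_{i=1}^N c^{i−1}·Σ_{j=1}^N ψ_{ij}·cos(θ_j − θ_i + α)·(ω_j − ω_i) ≤ Σ_{i=2}^N Σ_{j=1}^{i−1} ψ_{ij}·(ω_j − ω_i). -/
open Real Finset

/-- frequency-weighted rearrangement estimate under a small phase diameter. -/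
theorem stmt15 {N : ℕ} (hN : 2 ≤ N) (c α δ Dinf : ℝ)
    (hc : 0 < c) (hα : 0 < α) (hδ0 : 0 < δ) (hD : 0 < Dinf)
    (hαδ : α < δ) (hDδ : Dinf + δ < π / 2) (hcc : 2 < c * Real.cos (Dinf + δ))
    (ω θ : Fin N → ℝ) (hmono : Monotone ω)
    (hθ : ∀ i j, |θ j - θ i| ≤ Dinf)
    (ψ : Fin N → Fin N → ℝ) (hψsym : ∀ i j, ψ i j = ψ j i) (hψnn : ∀ i j, 0 ≤ ψ i j) :
    ∑ i : Fin N, c ^ (i : ℕ) *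
        ∑ j : Fin N, ψ i j * Real.cos (θ j - θ i + α) * (ω j - ω i)
      ≤ ∑ i : Fin N, ∑ j ∈ Finset.univ.filter (fun j => j < i), ψ i j * (ω j - ω i) := by
  have hcos1 := Real.cos_le_one (Dinf + δ)
  have hc2 : 2 < c := by nlinarith
  have hcosD : 0 < Real.cos (Dinf + δ) := by nlinarith
  set F : Fin N → Fin N → ℝ := fun i j =>
    c ^ (i : ℕ) * (ψ i j * Real.cos (θ j - θ i + α) * (ω j - ω i)) with hF
  have key : ∀ i j : Fin N, j < i → F i j + F j i ≤ ψ i j * (ω j - ω i) := by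
    intro i j hji
    have hw : 0 ≤ ω i - ω j := sub_nonneg.2 (hmono hji.le)
    have hψ := hψnn i j
    have hA : |θ j - θ i + α| ≤ Dinf + δ := by
      calc |θ j - θ i + α| ≤ |θ j - θ i| + |α| := abs_add_le _ _
        _ ≤ Dinf + δ := add_le_add (hθ i j) (by rw [abs_of_pos hα]; exact hαδ.le)
    have hcosA : Real.cos (Dinf + δ) ≤ Real.cos (θ j - θ i + α) := by
      rw [← Real.cos_abs (θ j - θ i + α)]
      exact Real.cos_le_cos_of_nonneg_of_le_pi (abs_nonneg _)
        (by linarith [Real.pi_pos]) hA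
    have hpow : c ^ ((j : ℕ) + 1) ≤ c ^ (i : ℕ) :=
      pow_le_pow_right₀ (by linarith) (Nat.succ_le_of_lt hji)
    have hK : 1 ≤ c ^ (i : ℕ) * Real.cos (θ j - θ i + α)
        - c ^ (j : ℕ) * Real.cos (θ i - θ j + α) := by
      have hjnn : (0:ℝ) ≤ c ^ (j : ℕ) := pow_nonneg hc.le _
      have h1 : c ^ (j : ℕ) * (c * Real.cos (Dinf + δ))
          ≤ c ^ (i : ℕ) * Real.cos (θ j - θ i + α) := by
        calc c ^ (j : ℕ) * (c * Real.cos (Dinf + δ))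
            = c ^ ((j : ℕ) + 1) * Real.cos (Dinf + δ) := by ring
          _ ≤ c ^ (i : ℕ) * Real.cos (Dinf + δ) :=
              mul_le_mul_of_nonneg_right hpow hcosD.le
          _ ≤ c ^ (i : ℕ) * Real.cos (θ j - θ i + α) :=
              mul_le_mul_of_nonneg_left hcosA (pow_nonneg hc.le _)
      have h2 : c ^ (j : ℕ) * Real.cos (θ i - θ j + α) ≤ c ^ (j : ℕ) := by
        nlinarith [Real.cos_le_one (θ i - θ j + α)]
      have h3 : (1:ℝ) ≤ c ^ (j : ℕ) := one_le_pow₀ (by linarith)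
      nlinarith
    have hψji : ψ j i = ψ i j := hψsym j i
    simp only [hF, hψji]
    nlinarith [mul_nonneg (mul_nonneg hψ hw) (sub_nonneg.2 hK)]
  have hdiag : ∀ i : Fin N, F i i = 0 := by
    intro i; simp [hF]
  have split : ∀ i : Fin N, ∑ j : Fin N, F i j
      = (∑ j ∈ Finset.univ.filter (fun j => j < i), F i j)
        + ∑ j ∈ Finset.univ.filter (fun j => i < j), F i j := by
    intro i
    rw [Finset.sum_filter, Finset.sum_filter, ← Finset.sum_add_distrib]
    apply Finset.sum_congr rfl
    intro j _
    rcases lt_trichotomy j i with h | h | h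
    · simp [h, asymm h]
    · subst h; simp [hdiag]
    · simp [h, asymm h]
  have swap : (∑ i : Fin N, ∑ j ∈ Finset.univ.filter (fun j => i < j), F i j)
      = ∑ i : Fin N, ∑ j ∈ Finset.univ.filter (fun j => j < i), F j i := by
    exact Finset.sum_comm' (by intro x y; simp)
  calc ∑ i : Fin N, c ^ (i : ℕ) *
        ∑ j : Fin N, ψ i j * Real.cos (θ j - θ i + α) * (ω j - ω i)
      = ∑ i : Fin N, ∑ j : Fin N, F i j := by
        apply Finset.sum_congr rfl; intro i _; rw [Finset.mul_sum]
    _ = ∑ i : Fin N, ∑ j ∈ Finset.univ.filter (fun j => j < i), (F i j + F j i) := by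
        simp only [split, Finset.sum_add_distrib]
        rw [swap]
    _ ≤ ∑ i : Fin N, ∑ j ∈ Finset.univ.filter (fun j => j < i), ψ i j * (ω j - ω i) := by
        apply Finset.sum_le_sum; intro i _
        apply Finset.sum_le_sum; intro j hj
        exact key i j (Finset.mem_filter.mp hj).2
end
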